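/- Let G be a countably infinite cancellative semigroup and let (F_n) be a Følner sequence in G such that for every α ∈ (0,1) one has ∑_{n=1}^∞ α^{|F_n|} < ∞. Then λ-almost every x ∈ {0,1}^G is (F_n)-normal, i.e., for λ-almost every x, for every nonempty finite set K ⊆ G and every block B : K → {0,1}, (1/|F_n|)·|{g ∈ F_n : ∀ h ∈ K, x(h·g) = B(h)}| → 2^{−|K|} as n → ∞. -/

import Mathlib

open Filter MeasureTheory

/- `(F n)` is a (left) Følner sequence in the semigroup `G`:
each `F n` is nonempty and finite, and for every `g ∈ G`,
`|F n ∩ g⁻¹ (F n)| / |F n| → 1`, where `g⁻¹ F = {h : g * h ∈ F}`. -/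
open scoped Classical in
def IsFolner {G : Type*} [Mul G] (F : ℕ → Finset G) : Prop :=
  (∀ n, (F n).Nonempty) ∧
  ∀ g : G, Tendsto
    (fun n => (((F n).filter (fun h => g * h ∈ F n)).card : ℝ) / (F n).card)
    atTop (nhds 1)

/- `x : G → {0,1}` is `(F n)`-normal: for every nonempty finite `K ⊆ G` and
every block `B : K → {0,1}`,
`(1/|F n|) · |{g ∈ F n : ∀ h ∈ K, x (h * g) = B h}| → 2^{-|K|}`. -/
def IsNormalFun {G : Type*} [Mul G] (F : ℕ → Finset G) (x : G → Bool) : Prop :=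
  ∀ K : Finset G, K.Nonempty → ∀ B : G → Bool,
    Tendsto
      (fun n => (((F n).filter (fun g => ∀ h ∈ K, x (h * g) = B h)).card : ℝ) / (F n).card)
      atTop (nhds ((1 / 2 : ℝ) ^ K.card))

open Real Finset


section
variable {G : Type*} [Semigroup G] [IsCancelMul G]
variable {μ : Measure (G → Bool)}

theorem meas_inter
    (hμ : ∀ (K : Finset G) (B : G → Bool),
      μ {x | ∀ h ∈ K, x h = B h} = (2 : ENNReal)⁻¹ ^ K.card)
    (K : Finset G) (B : G → Bool) (A : Finset G)
    (hdisj : ∀ g ∈ A, ∀ g' ∈ A, g ≠ g' → ∀ h ∈ K, ∀ h' ∈ K, h * g ≠ h' * g') :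
    μ {x | ∀ g ∈ A, ∀ h ∈ K, x (h * g) = B h} = (2 : ENNReal)⁻¹ ^ (K.card * A.card) := by
  classical
  set K' : Finset G := A.biUnion (fun g => K.image (· * g)) with hK'
  set B' : G → Bool := fun c =>
    if hc : ∃ h ∈ K, ∃ g ∈ A, h * g = c then B hc.choose else false with hB'
  have key : ∀ h ∈ K, ∀ g ∈ A, B' (h * g) = B h := by
    intro h hh g hg
    have hc : ∃ h' ∈ K, ∃ g' ∈ A, h' * g' = h * g := ⟨h, hh, g, hg, rfl⟩
    simp only [hB', dif_pos hc]
    obtain ⟨hh₀, g₀, hg₀, he₀⟩ := hc.choose_spec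
    have hg₀g : g₀ = g := by
      by_contra hne
      exact hdisj g₀ hg₀ g hg hne hc.choose hh₀ h hh he₀
    subst hg₀g
    rw [mul_right_cancel he₀]
  have hset : {x : G → Bool | ∀ c ∈ K', x c = B' c}
      = {x : G → Bool | ∀ g ∈ A, ∀ h ∈ K, x (h * g) = B h} := by
    ext x
    simp only [Set.mem_setOf_eq]
    constructor
    · intro hx g hg h hh
      have hmem : h * g ∈ K' := by
        rw [hK']
        exact Finset.mem_biUnion.2 ⟨g, hg, Finset.mem_image.2 ⟨h, hh, rfl⟩⟩
      rw [hx _ hmem, key h hh g hg]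
    · intro hx c hc
      rw [hK'] at hc
      obtain ⟨g, hg, hc⟩ := Finset.mem_biUnion.1 hc
      obtain ⟨h, hh, rfl⟩ := Finset.mem_image.1 hc
      rw [hx g hg h hh, key h hh g hg]
  have hcard : K'.card = K.card * A.card := by
    rw [hK', Finset.card_biUnion]
    · rw [Finset.sum_congr rfl (fun g _ => Finset.card_image_of_injective (f := (· * g)) K
        (fun h₁ h₂ he => mul_right_cancel he))]
      rw [Finset.sum_const, smul_eq_mul, mul_comm]
    · intro g hg g' hg' hne
      rw [Function.onFun, Finset.disjoint_left]
      intro e he he'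
      obtain ⟨h, hh, rfl⟩ := Finset.mem_image.1 he
      obtain ⟨h', hh', he'⟩ := Finset.mem_image.1 he'
      exact hdisj g' hg' g hg (Ne.symm hne) h' hh' h hh he'
  rw [← hset, hμ K' B', hcard]

/-- The cylinder set determined by block `B` on `K`, translated by `g`. -/
def Cyl (K : Finset G) (B : G → Bool) (g : G) : Set (G → Bool) :=
  {x | ∀ h ∈ K, x (h * g) = B h}

theorem measurableSet_cyl (K : Finset G) (B : G → Bool) (g : G) :
    MeasurableSet (Cyl K B g) := by
  have : Cyl K B g = ⋂ h ∈ (K : Set G), (fun x : G → Bool => x (h * g)) ⁻¹' {B h} := by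
    ext x; simp [Cyl, Set.mem_iInter]
  rw [this]
  exact MeasurableSet.biInter (K : Set G).to_countable
    (fun h _ => measurable_pi_apply (h * g) (measurableSet_singleton _))

theorem measurableSet_interCyl (K : Finset G) (B : G → Bool) (A : Finset G) :
    MeasurableSet {x : G → Bool | ∀ g ∈ A, ∀ h ∈ K, x (h * g) = B h} := by
  have : {x : G → Bool | ∀ g ∈ A, ∀ h ∈ K, x (h * g) = B h}
      = ⋂ g ∈ (A : Set G), Cyl K B g := by
    ext x; simp [Cyl, Set.mem_iInter]
  rw [this]
  exact MeasurableSet.biInter (A : Set G).to_countable (fun g _ => measurableSet_cyl K B g)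

theorem prod_indicator_cyl (K : Finset G) (B : G → Bool) (A : Finset G) (x : G → Bool) :
    ∏ g ∈ A, Set.indicator (Cyl K B g) (fun _ => (1 : ℝ)) x
      = Set.indicator {x : G → Bool | ∀ g ∈ A, ∀ h ∈ K, x (h * g) = B h}
          (fun _ => (1 : ℝ)) x := by
  classical
  by_cases hx : ∀ g ∈ A, ∀ h ∈ K, x (h * g) = B h
  · rw [Set.indicator_of_mem (show x ∈ {x : G → Bool | ∀ g ∈ A, ∀ h ∈ K, x (h * g) = B h} from hx),
      Finset.prod_eq_one]
    intro g hg
    exact Set.indicator_of_mem (show x ∈ Cyl K B g from hx g hg) _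
  · rw [Set.indicator_of_notMem (show x ∉ {x : G → Bool | ∀ g ∈ A, ∀ h ∈ K, x (h * g) = B h} from hx)]
    push_neg at hx
    obtain ⟨g, hg, hxg⟩ : ∃ g ∈ A, ¬ ∀ h ∈ K, x (h * g) = B h := by
      obtain ⟨g, hg, h, hh, hne⟩ := hx
      exact ⟨g, hg, fun hall => hne (hall h hh)⟩
    exact Finset.prod_eq_zero hg (Set.indicator_of_notMem (show x ∉ Cyl K B g from hxg) _)

theorem integral_exp_class
    (hμ : ∀ (K : Finset G) (B : G → Bool),
      μ {x | ∀ h ∈ K, x h = B h} = (2 : ENNReal)⁻¹ ^ K.card)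
    (K : Finset G) (B : G → Bool) (A : Finset G)
    (hdisj : ∀ g ∈ A, ∀ g' ∈ A, g ≠ g' → ∀ h ∈ K, ∀ h' ∈ K, h * g ≠ h' * g')
    (u : ℝ) :
    ∫ x, ∏ g ∈ A, Real.exp (u * (Set.indicator (Cyl K B g) (fun _ => (1:ℝ)) x
        - (2⁻¹ : ℝ) ^ K.card)) ∂μ
      = ((2⁻¹ : ℝ) ^ K.card * Real.exp (u * (1 - (2⁻¹ : ℝ) ^ K.card))
        + (1 - (2⁻¹ : ℝ) ^ K.card) * Real.exp (-(u * (2⁻¹ : ℝ) ^ K.card))) ^ A.card := by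
  classical
  haveI : IsProbabilityMeasure μ := ⟨by
    have := hμ ∅ B
    simpa using this⟩
  set m : ℝ := (2⁻¹ : ℝ) ^ K.card with hm
  set b : ℝ := Real.exp (-(u * m)) with hb
  set c : ℝ := Real.exp (u * (1 - m)) - b with hc
  have hpt : ∀ x, ∏ g ∈ A, Real.exp (u * (Set.indicator (Cyl K B g) (fun _ => (1:ℝ)) x - m))
      = ∏ g ∈ A, (c * Set.indicator (Cyl K B g) (fun _ => (1:ℝ)) x + b) := by
    intro x
    refine Finset.prod_congr rfl fun g _ => ?_
    by_cases hx : x ∈ Cyl K B g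
    · rw [Set.indicator_of_mem hx]
      simp only [hc, mul_one]
      ring
    · rw [Set.indicator_of_notMem hx]
      simp only [hb, mul_zero, zero_sub, zero_add]
      rw [mul_neg]
  have hexp : ∀ x, ∏ g ∈ A, (c * Set.indicator (Cyl K B g) (fun _ => (1:ℝ)) x + b)
      = ∑ t ∈ A.powerset, (c ^ t.card * b ^ (A \ t).card) *
        Set.indicator {x : G → Bool | ∀ g ∈ t, ∀ h ∈ K, x (h * g) = B h} (fun _ => (1:ℝ)) x := by
    intro x
    rw [Finset.prod_add]
    refine Finset.sum_congr rfl fun t ht => ?_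
    rw [← prod_indicator_cyl K B t x]
    rw [Finset.prod_mul_distrib, Finset.prod_const, Finset.prod_const]
    ring
  have hmeas : ∀ t ∈ A.powerset, μ {x : G → Bool | ∀ g ∈ t, ∀ h ∈ K, x (h * g) = B h}
      = (2 : ENNReal)⁻¹ ^ (K.card * t.card) := by
    intro t ht
    have hsub := Finset.mem_powerset.1 ht
    exact meas_inter hμ K B t
      (fun g hg g' hg' => hdisj g (hsub hg) g' (hsub hg'))
  calc ∫ x, ∏ g ∈ A, Real.exp (u * (Set.indicator (Cyl K B g) (fun _ => (1:ℝ)) x - m)) ∂μ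
      = ∫ x, ∑ t ∈ A.powerset, (c ^ t.card * b ^ (A \ t).card) *
        Set.indicator {x : G → Bool | ∀ g ∈ t, ∀ h ∈ K, x (h * g) = B h} (fun _ => (1:ℝ)) x ∂μ := by
        refine integral_congr_ae (Filter.Eventually.of_forall fun x => ?_)
        exact (hpt x).trans (hexp x)
    _ = ∑ t ∈ A.powerset, (c ^ t.card * b ^ (A \ t).card) *
        (μ {x : G → Bool | ∀ g ∈ t, ∀ h ∈ K, x (h * g) = B h}).toReal := by
        rw [integral_finset_sum]
        · refine Finset.sum_congr rfl fun t ht => ?_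
          rw [integral_const_mul, integral_indicator_const (1 : ℝ) (measurableSet_interCyl K B t)]
          rw [smul_eq_mul, mul_one, Measure.real]
        · intro t ht
          exact (((integrable_const (1:ℝ)).indicator (measurableSet_interCyl K B t)).const_mul _)
    _ = ∑ t ∈ A.powerset, (c * m) ^ t.card * b ^ (A \ t).card := by
        refine Finset.sum_congr rfl fun t ht => ?_
        have h2 : ((2 : ENNReal)⁻¹ ^ (K.card * t.card)).toReal = m ^ t.card := by
          rw [ENNReal.toReal_pow, ENNReal.toReal_inv, hm, ← pow_mul]
          norm_num
        rw [hmeas t ht, h2, mul_pow]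
        ring
    _ = (c * m + b) ^ A.card := by
        rw [← Finset.prod_const (c * m + b)]
        rw [Finset.prod_add]
        refine Finset.sum_congr rfl fun t ht => ?_
        rw [Finset.prod_const, Finset.prod_const]
    _ = (m * Real.exp (u * (1 - m)) + (1 - m) * Real.exp (-(u * m))) ^ A.card := by
        congr 1
        rw [hc, hb]
        ring

end

theorem exp_quad_bound {v : ℝ} (hv : |v| ≤ 1) : Real.exp v ≤ 1 + v + v ^ 2 := by
  have h := Real.exp_bound hv (by norm_num : 0 < 2)
  have hs : (∑ m ∈ Finset.range 2, v ^ m / m.factorial) = 1 + v := by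
    simp [Finset.sum_range_succ]
  rw [hs] at h
  have h' := (abs_le.1 h).2
  have hv2 : |v| ^ 2 = v ^ 2 := sq_abs v
  norm_num [hv2] at h'
  nlinarith [sq_nonneg v]

theorem e1_le {m u : ℝ} (hm0 : 0 ≤ m) (hm1 : m ≤ 1) (hu : |u| ≤ 1) :
    m * Real.exp (u * (1 - m)) + (1 - m) * Real.exp (-(u * m)) ≤ Real.exp (u ^ 2) := by
  have h1 : Real.exp (u * (1 - m)) ≤ 1 + u * (1 - m) + (u * (1 - m)) ^ 2 := by
    apply exp_quad_bound
    rw [abs_mul]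
    calc |u| * |1 - m| ≤ 1 * 1 := by
          apply mul_le_mul hu _ (abs_nonneg _) zero_le_one
          rw [abs_le]; constructor <;> nlinarith
      _ = 1 := mul_one 1
  have h2 : Real.exp (-(u * m)) ≤ 1 + (-(u * m)) + (-(u * m)) ^ 2 := by
    apply exp_quad_bound
    rw [abs_neg, abs_mul]
    calc |u| * |m| ≤ 1 * 1 := by
          apply mul_le_mul hu _ (abs_nonneg _) zero_le_one
          rw [abs_le]; constructor <;> nlinarith
      _ = 1 := mul_one 1
  have h3 : 1 + u ^ 2 ≤ Real.exp (u ^ 2) := by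
    have := Real.add_one_le_exp (u ^ 2)
    linarith
  nlinarith [mul_le_mul_of_nonneg_left h1 hm0, mul_le_mul_of_nonneg_left h2 (by linarith : (0:ℝ) ≤ 1 - m),
    sq_nonneg u, sq_nonneg (u * m), sq_nonneg (u * (1 - m)), mul_nonneg hm0 (by linarith : (0:ℝ) ≤ 1 - m),
    sq_nonneg (u * m * (1 - m))]

/-- Greedy coloring: color a finset so that elements with intersecting `K`-translates
get different colors. -/
theorem exists_coloring {G : Type*} [Semigroup G] [IsCancelMul G]
    (K : Finset G) (s : Finset G) :
    ∃ c : G → Fin (K.card ^ 2 + 1), ∀ g ∈ s, ∀ g' ∈ s, g ≠ g' → c g = c g' →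
      ∀ h ∈ K, ∀ h' ∈ K, h * g ≠ h' * g' := by
  classical
  induction s using Finset.induction_on with
  | empty => exact ⟨fun _ => 0, by simp⟩
  | @insert a s ha ih =>
    obtain ⟨c, hc⟩ := ih
    set Nbr : Finset G := s.filter (fun g' => ∃ h ∈ K, ∃ h' ∈ K, h * a = h' * g') with hNbr
    have hcard : Nbr.card ≤ K.card ^ 2 := by
      have : ∀ g' ∈ Nbr, ∃ p ∈ K ×ˢ K, p.1 * a = p.2 * g' := by
        intro g' hg'
        simp only [hNbr, Finset.mem_filter] at hg'
        obtain ⟨-, h, hh, h', hh', he⟩ := hg'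
        exact ⟨(h, h'), Finset.mem_product.2 ⟨hh, hh'⟩, he⟩
      choose p hp hpe using this
      classical
      let q : G → G × G := fun g' => if hg' : g' ∈ Nbr then p g' hg' else (a, a)
      have hq1 : ∀ g' ∈ Nbr, q g' ∈ K ×ˢ K := by
        intro g' hg'
        simp only [q, dif_pos hg']
        exact hp g' hg'
      have hq2 : Set.InjOn q Nbr := by
        intro g₁ hg₁ g₂ hg₂ he
        simp only [Finset.mem_coe] at hg₁ hg₂
        simp only [q, dif_pos hg₁, dif_pos hg₂] at he
        have e1 := hpe g₁ hg₁
        have e2 := hpe g₂ hg₂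
        rw [he] at e1
        have : (p g₂ hg₂).2 * g₁ = (p g₂ hg₂).2 * g₂ := by rw [← e1, e2]
        exact mul_left_cancel this
      calc Nbr.card ≤ (K ×ˢ K).card := Finset.card_le_card_of_injOn q hq1 hq2
        _ = K.card ^ 2 := by rw [Finset.card_product, sq]
    have hused : (Nbr.image c).card < K.card ^ 2 + 1 :=
      lt_of_le_of_lt (Finset.card_image_le.trans hcard) (Nat.lt_succ_self _)
    obtain ⟨i, hi⟩ : ∃ i : Fin (K.card ^ 2 + 1), i ∉ Nbr.image c := by
      by_contra hcon
      push_neg at hcon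
      have : (Finset.univ : Finset (Fin (K.card ^ 2 + 1))).card ≤ (Nbr.image c).card :=
        Finset.card_le_card (fun j _ => hcon j)
      simp only [Finset.card_univ, Fintype.card_fin] at this
      omega
    refine ⟨Function.update c a i, ?_⟩
    intro g hg g' hg' hne hcol h hh h' hh'
    rcases Finset.mem_insert.1 hg with rfl | hgs
    · rcases Finset.mem_insert.1 hg' with rfl | hg's
      · exact absurd rfl hne
      · -- g = a, g' ∈ s
        have hcg' : Function.update c g i g' = c g' :=
          Function.update_of_ne (by intro hgg; subst hgg; exact ha hg's) _ _
        rw [Function.update_self, hcg'] at hcol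
        intro he
        have : g' ∈ Nbr := Finset.mem_filter.2 ⟨hg's, h, hh, h', hh', he⟩
        exact hi (Finset.mem_image.2 ⟨g', this, hcol.symm⟩)
    · rcases Finset.mem_insert.1 hg' with rfl | hg's
      · -- g ∈ s, g' = a
        have hcg : Function.update c g' i g = c g :=
          Function.update_of_ne (by intro hgg; subst hgg; exact ha hgs) _ _
        rw [Function.update_self, hcg] at hcol
        intro he
        have : g ∈ Nbr := Finset.mem_filter.2 ⟨hgs, h', hh', h, hh, he.symm⟩
        exact hi (Finset.mem_image.2 ⟨g, this, hcol⟩)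
      · have h1 : Function.update c a i g = c g :=
          Function.update_of_ne (by intro hgg; subst hgg; exact ha hgs) _ _
        have h2 : Function.update c a i g' = c g' :=
          Function.update_of_ne (by intro hgg; subst hgg; exact ha hg's) _ _
        rw [h1, h2] at hcol
        exact hc g hgs g' hg's hne hcol h hh h' hh'

/-- AM-GM for a product over `Fin r`. -/
theorem prod_le_sum_pow {r : ℕ} (hr : 0 < r) (y : Fin r → ℝ) (hy : ∀ i, 0 ≤ y i) :
    ∏ i, y i ≤ ∑ i, (1 / r : ℝ) * y i ^ r := by
  have hw' : ∑ _i : Fin r, (1 / r : ℝ) = 1 := by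
    simp [Finset.sum_const, Finset.card_univ]
    field_simp
  have := Real.geom_mean_le_arith_mean_weighted Finset.univ (fun _ => (1 / r : ℝ))
    (fun i => y i ^ r) (fun _ _ => by positivity) hw' (fun i _ => pow_nonneg (hy i) r)
  calc ∏ i, y i = ∏ i, (y i ^ r) ^ (1 / r : ℝ) := by
        refine Finset.prod_congr rfl fun i _ => ?_
        rw [← Real.rpow_natCast (y i) r, ← Real.rpow_mul (hy i)]
        rw [mul_one_div, div_self (by positivity), Real.rpow_one]
    _ ≤ ∑ i, (1 / r : ℝ) * y i ^ r := this

section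
variable {G : Type*} [Semigroup G] [IsCancelMul G]
variable {μ : Measure (G → Bool)}

/-- The centered sum of block indicators over a window `s`. -/
noncomputable def Sdev (K : Finset G) (B : G → Bool) (s : Finset G) (x : G → Bool) : ℝ :=
  ∑ g ∈ s, (Set.indicator (Cyl K B g) (fun _ => (1:ℝ)) x - (2⁻¹ : ℝ) ^ K.card)

theorem measurable_Sdev (K : Finset G) (B : G → Bool) (s : Finset G) :
    Measurable (Sdev K B s) := by
  apply Finset.measurable_sum
  intro g _
  exact ((measurable_const.indicator (measurableSet_cyl K B g)).sub measurable_const)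

theorem abs_Sdev_le (K : Finset G) (B : G → Bool) (s : Finset G) (x : G → Bool) :
    |Sdev K B s x| ≤ s.card := by
  calc |Sdev K B s x| ≤ ∑ g ∈ s, |Set.indicator (Cyl K B g) (fun _ => (1:ℝ)) x - (2⁻¹:ℝ) ^ K.card| :=
        Finset.abs_sum_le_sum_abs _ _
    _ ≤ ∑ _g ∈ s, (1 : ℝ) := by
        refine Finset.sum_le_sum fun g _ => ?_
        have hm0 : (0:ℝ) ≤ (2⁻¹:ℝ) ^ K.card := by positivity
        have hm1 : (2⁻¹:ℝ) ^ K.card ≤ 1 := pow_le_one₀ (by norm_num) (by norm_num)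
        by_cases hx : x ∈ Cyl K B g
        · rw [Set.indicator_of_mem hx, abs_le]
          constructor <;> linarith
        · rw [Set.indicator_of_notMem hx, abs_le]
          constructor <;> linarith
    _ = s.card := by simp

theorem integrable_exp_mul_Sdev [IsProbabilityMeasure μ]
    (K : Finset G) (B : G → Bool) (s : Finset G) (v : ℝ) :
    Integrable (fun x => Real.exp (v * Sdev K B s x)) μ := by
  apply Integrable.mono' (integrable_const (Real.exp (|v| * s.card)))
  · exact ((measurable_const.mul (measurable_Sdev K B s)).exp).aestronglyMeasurable
  · refine Filter.Eventually.of_forall fun x => ?_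
    rw [Real.norm_eq_abs, Real.abs_exp]
    apply Real.exp_le_exp.2
    calc v * Sdev K B s x ≤ |v * Sdev K B s x| := le_abs_self _
      _ = |v| * |Sdev K B s x| := abs_mul _ _
      _ ≤ |v| * s.card := by
          exact mul_le_mul_of_nonneg_left (abs_Sdev_le K B s x) (abs_nonneg v)

theorem integral_exp_Sdev_le
    (hμ : ∀ (K : Finset G) (B : G → Bool),
      μ {x | ∀ h ∈ K, x h = B h} = (2 : ENNReal)⁻¹ ^ K.card)
    (K : Finset G) (B : G → Bool) (s : Finset G) (u : ℝ)
    (hu : |u| * (K.card ^ 2 + 1) ≤ 1) :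
    ∫ x, Real.exp (u * Sdev K B s x) ∂μ
      ≤ Real.exp ((u * (K.card ^ 2 + 1)) ^ 2 * s.card) := by
  classical
  haveI : IsProbabilityMeasure μ := ⟨by simpa using hμ ∅ B⟩
  set r : ℕ := K.card ^ 2 + 1 with hrdef
  have hr : 0 < r := Nat.succ_pos _
  obtain ⟨c, hc⟩ := exists_coloring K s
  set T : Fin r → Finset G := fun i => s.filter (fun g => c g = i) with hT
  have hTdisj : ∀ i : Fin r, ∀ g ∈ T i, ∀ g' ∈ T i, g ≠ g' →
      ∀ h ∈ K, ∀ h' ∈ K, h * g ≠ h' * g' := by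
    intro i g hg g' hg' hne
    rw [hT] at hg hg'
    simp only [Finset.mem_filter] at hg hg'
    exact hc g hg.1 g' hg'.1 hne (hg.2.trans hg'.2.symm)
  have hsplit : ∀ x, Sdev K B s x = ∑ i : Fin r, Sdev K B (T i) x := by
    intro x
    simp only [Sdev, hT]
    exact (Finset.sum_fiberwise s (fun g => c g) _).symm
  set m : ℝ := (2⁻¹:ℝ) ^ K.card with hm
  have hm0 : 0 ≤ m := by positivity
  have hm1 : m ≤ 1 := pow_le_one₀ (by norm_num) (by norm_num)
  have hur : |u * r| ≤ 1 := by
    rw [abs_mul]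
    rw [Nat.abs_cast]
    exact_mod_cast hu
  -- pointwise bound via AM-GM
  have hpt : ∀ x, Real.exp (u * Sdev K B s x)
      ≤ ∑ i : Fin r, (1 / r : ℝ) * Real.exp ((u * r) * Sdev K B (T i) x) := by
    intro x
    rw [hsplit x, Finset.mul_sum, Real.exp_sum]
    have := prod_le_sum_pow hr (fun i => Real.exp (u * Sdev K B (T i) x))
      (fun i => (Real.exp_pos _).le)
    refine this.trans (le_of_eq (Finset.sum_congr rfl fun i _ => ?_))
    rw [← Real.exp_nat_mul]
    ring_nf
  -- integrate
  have hint : ∀ i : Fin r, ∫ x, Real.exp ((u * r) * Sdev K B (T i) x) ∂μ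
      ≤ Real.exp ((u * r) ^ 2 * s.card) := by
    intro i
    have heq : ∀ x, Real.exp ((u * r) * Sdev K B (T i) x)
        = ∏ g ∈ T i, Real.exp ((u * r) * (Set.indicator (Cyl K B g) (fun _ => (1:ℝ)) x - m)) := by
      intro x
      rw [Sdev, Finset.mul_sum, Real.exp_sum]
    calc ∫ x, Real.exp ((u * r) * Sdev K B (T i) x) ∂μ
        = (m * Real.exp ((u * r) * (1 - m)) + (1 - m) * Real.exp (-((u * r) * m))) ^ (T i).card := by
          rw [integral_congr_ae (Filter.Eventually.of_forall fun x => heq x)]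
          exact integral_exp_class hμ K B (T i) (hTdisj i) (u * r)
      _ ≤ Real.exp ((u * r) ^ 2) ^ (T i).card := by
          apply pow_le_pow_left₀
          · have : (0:ℝ) ≤ m * Real.exp ((u * r) * (1 - m)) := by positivity
            have : (0:ℝ) ≤ (1 - m) * Real.exp (-((u * r) * m)) := by
              apply mul_nonneg (by linarith) (Real.exp_pos _).le
            linarith
          · exact e1_le hm0 hm1 hur
      _ = Real.exp ((u * r) ^ 2 * (T i).card) := by
          rw [← Real.exp_nat_mul]
          ring_nf
      _ ≤ Real.exp ((u * r) ^ 2 * s.card) := by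
          apply Real.exp_le_exp.2
          apply mul_le_mul_of_nonneg_left _ (sq_nonneg _)
          exact_mod_cast Finset.card_le_card (Finset.filter_subset _ _)
  calc ∫ x, Real.exp (u * Sdev K B s x) ∂μ
      ≤ ∫ x, ∑ i : Fin r, (1 / r : ℝ) * Real.exp ((u * r) * Sdev K B (T i) x) ∂μ := by
        apply integral_mono (integrable_exp_mul_Sdev K B s u)
        · apply integrable_finset_sum
          intro i _
          exact (integrable_exp_mul_Sdev K B (T i) (u * r)).const_mul _
        · exact hpt
    _ = ∑ i : Fin r, (1 / r : ℝ) * ∫ x, Real.exp ((u * r) * Sdev K B (T i) x) ∂μ := by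
        rw [integral_finset_sum]
        · exact Finset.sum_congr rfl fun i _ => integral_const_mul _ _
        · intro i _
          exact (integrable_exp_mul_Sdev K B (T i) (u * r)).const_mul _
    _ ≤ ∑ _i : Fin r, (1 / r : ℝ) * Real.exp ((u * r) ^ 2 * s.card) := by
        refine Finset.sum_le_sum fun i _ => ?_
        exact mul_le_mul_of_nonneg_left (hint i) (by positivity)
    _ = Real.exp ((u * r) ^ 2 * s.card) := by
        rw [Finset.sum_const, Finset.card_univ, Fintype.card_fin, nsmul_eq_mul]
        field_simp
    _ = Real.exp ((u * (K.card ^ 2 + 1)) ^ 2 * s.card) := by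
        rw [hrdef]
        norm_num

end

section
variable {G : Type*} [Semigroup G] [IsCancelMul G]
variable {μ : Measure (G → Bool)}

theorem dev_bound
    (hμ : ∀ (K : Finset G) (B : G → Bool),
      μ {x | ∀ h ∈ K, x h = B h} = (2 : ENNReal)⁻¹ ^ K.card)
    (K : Finset G) (B : G → Bool) {ε : ℝ} (hε : 0 < ε) :
    ∃ α ∈ Set.Ioo (0:ℝ) 1, ∀ s : Finset G,
      μ {x | ε * s.card ≤ |Sdev K B s x|} ≤ ENNReal.ofReal (2 * α ^ s.card) := by
  classical
  haveI : IsProbabilityMeasure μ := ⟨by simpa using hμ ∅ B⟩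
  set r : ℝ := (K.card : ℝ) ^ 2 + 1 with hrdef
  have hr0 : 0 < r := by positivity
  set t : ℝ := min (ε / (2 * r ^ 2)) (1 / r) with htdef
  have ht0 : 0 < t := lt_min (by positivity) (by positivity)
  have htr : t * r ≤ 1 := by
    have h := min_le_right (ε / (2 * r ^ 2)) (1 / r)
    calc t * r ≤ (1 / r) * r := mul_le_mul_of_nonneg_right h hr0.le
      _ = 1 := by field_simp
  have htr2 : t * r ^ 2 ≤ ε / 2 := by
    have h := min_le_left (ε / (2 * r ^ 2)) (1 / r)
    calc t * r ^ 2 ≤ (ε / (2 * r ^ 2)) * r ^ 2 :=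
          mul_le_mul_of_nonneg_right h (by positivity)
      _ = ε / 2 := by field_simp
  refine ⟨Real.exp (-(t * ε) / 2), ⟨Real.exp_pos _, Real.exp_lt_one_iff.2 (by nlinarith)⟩, ?_⟩
  intro s
  set N := s.card with hN
  have hone : ∀ σ : ℝ, |σ| = 1 → μ {x | ε * N ≤ σ * Sdev K B s x}
      ≤ ENNReal.ofReal (Real.exp (-(t * ε) / 2) ^ N) := by
    intro σ hσ
    set u : ℝ := σ * t with hu
    have huabs : |u| = t := by rw [hu, abs_mul, hσ, one_mul, abs_of_pos ht0]
    have hu1 : |u| * ((K.card : ℝ) ^ 2 + 1) ≤ 1 := by rw [huabs, ← hrdef]; exact htr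
    have hint := integral_exp_Sdev_le hμ K B s u hu1
    have hsub : {x | ε * N ≤ σ * Sdev K B s x}
        ⊆ {x | Real.exp (t * (ε * N)) ≤ Real.exp (u * Sdev K B s x)} := by
      intro x hx
      simp only [Set.mem_setOf_eq] at hx ⊢
      apply Real.exp_le_exp.2
      have heq : u * Sdev K B s x = t * (σ * Sdev K B s x) := by rw [hu]; ring
      rw [heq]
      exact mul_le_mul_of_nonneg_left hx ht0.le
    have hmark := mul_meas_ge_le_integral_of_nonneg (μ := μ)
      (f := fun x => Real.exp (u * Sdev K B s x))
      (Filter.Eventually.of_forall fun x => (Real.exp_pos _).le)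
      (integrable_exp_mul_Sdev K B s u) (Real.exp (t * (ε * N)))
    have hex : (u * ((K.card : ℝ) ^ 2 + 1)) ^ 2 = (t * r) ^ 2 := by
      rw [← hrdef, hu]
      have hσ2 : σ ^ 2 = 1 := by rw [← sq_abs, hσ]; norm_num
      nlinarith [hσ2]
    rw [hex] at hint
    have hchain := hmark.trans hint
    have htoReal : (μ {x | Real.exp (t * (ε * N)) ≤ Real.exp (u * Sdev K B s x)}).toReal
        ≤ Real.exp (-(t * ε) / 2) ^ N := by
      have h4 : (μ {x | Real.exp (t * (ε * N)) ≤ Real.exp (u * Sdev K B s x)}).toReal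
          ≤ Real.exp ((t * r) ^ 2 * N) / Real.exp (t * (ε * N)) := by
        rw [le_div_iff₀ (Real.exp_pos _)]
        calc (μ _).toReal * Real.exp (t * (ε * N))
            = Real.exp (t * (ε * N)) * (μ _).toReal := mul_comm _ _
          _ ≤ _ := hchain
      refine h4.trans ?_
      rw [← Real.exp_sub, ← Real.exp_nat_mul]
      apply Real.exp_le_exp.2
      have hcN : (0:ℝ) ≤ (N : ℝ) := Nat.cast_nonneg _
      nlinarith [htr2, ht0.le, mul_le_mul_of_nonneg_left htr2 ht0.le]
    calc μ {x | ε * N ≤ σ * Sdev K B s x}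
        ≤ μ {x | Real.exp (t * (ε * N)) ≤ Real.exp (u * Sdev K B s x)} := measure_mono hsub
      _ = ENNReal.ofReal ((μ {x | Real.exp (t * (ε * N)) ≤ Real.exp (u * Sdev K B s x)}).toReal) :=
          (ENNReal.ofReal_toReal (measure_ne_top μ _)).symm
      _ ≤ ENNReal.ofReal (Real.exp (-(t * ε) / 2) ^ N) := ENNReal.ofReal_le_ofReal htoReal
  have hU : {x : G → Bool | ε * N ≤ |Sdev K B s x|}
      ⊆ {x | ε * N ≤ 1 * Sdev K B s x} ∪ {x | ε * N ≤ (-1) * Sdev K B s x} := by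
    intro x hx
    simp only [Set.mem_setOf_eq] at hx
    rcases le_abs.1 hx with h | h
    · left; simpa using h
    · right
      simp only [Set.mem_setOf_eq, neg_one_mul]
      exact h
  calc μ {x | ε * N ≤ |Sdev K B s x|}
      ≤ μ ({x | ε * N ≤ 1 * Sdev K B s x} ∪ {x | ε * N ≤ (-1) * Sdev K B s x}) := measure_mono hU
    _ ≤ μ {x | ε * N ≤ 1 * Sdev K B s x} + μ {x | ε * N ≤ (-1) * Sdev K B s x} :=
        measure_union_le _ _
    _ ≤ ENNReal.ofReal (Real.exp (-(t * ε) / 2) ^ N) + ENNReal.ofReal (Real.exp (-(t * ε) / 2) ^ N) :=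
        add_le_add (hone 1 (by norm_num)) (hone (-1) (by norm_num))
    _ = ENNReal.ofReal (2 * Real.exp (-(t * ε) / 2) ^ N) := by
        rw [← ENNReal.ofReal_add (by positivity) (by positivity)]
        ring_nf

theorem Sdev_eq (K : Finset G) (B : G → Bool) (s : Finset G) (x : G → Bool) :
    Sdev K B s x = ((s.filter (fun g => ∀ h ∈ K, x (h * g) = B h)).card : ℝ)
      - (2⁻¹ : ℝ) ^ K.card * s.card := by
  classical
  rw [Sdev, Finset.sum_sub_distrib, Finset.sum_const, nsmul_eq_mul]
  have h1 : ∑ g ∈ s, Set.indicator (Cyl K B g) (fun _ => (1:ℝ)) x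
      = ((s.filter (fun g => ∀ h ∈ K, x (h * g) = B h)).card : ℝ) := by
    rw [Finset.sum_congr rfl (fun g _ => Set.indicator_apply (Cyl K B g) (fun _ => (1:ℝ)) x)]
    rw [Finset.sum_boole]
    have hfc : s.filter (fun g => x ∈ Cyl K B g) = s.filter (fun g => ∀ h ∈ K, x (h * g) = B h) :=
      Finset.filter_congr (fun g _ => by simp [Cyl])
    rw [hfc]
  rw [h1]
  ring

theorem ae_tendsto_block
    (hμ : ∀ (K : Finset G) (B : G → Bool),
      μ {x | ∀ h ∈ K, x h = B h} = (2 : ENNReal)⁻¹ ^ K.card)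
    (F : ℕ → Finset G) (hne : ∀ n, (F n).Nonempty)
    (hsum : ∀ α : ℝ, α ∈ Set.Ioo (0 : ℝ) 1 → Summable fun n => α ^ (F n).card)
    (K : Finset G) (B : G → Bool) :
    ∀ᵐ x ∂μ, Filter.Tendsto
      (fun n => (((F n).filter (fun g => ∀ h ∈ K, x (h * g) = B h)).card : ℝ) / (F n).card)
      Filter.atTop (nhds ((1 / 2 : ℝ) ^ K.card)) := by
  classical
  have key : ∀ k : ℕ, ∀ᵐ x ∂μ, ∀ᶠ n in Filter.atTop,
      x ∉ {x : G → Bool | (1 / (k + 1) : ℝ) * (F n).card ≤ |Sdev K B (F n) x|} := by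
    intro k
    have hε : (0:ℝ) < 1 / ((k:ℝ) + 1) := by positivity
    obtain ⟨α, hα, hb⟩ := dev_bound hμ K B hε
    apply ae_eventually_notMem
    have hle : ∑' n, μ {x : G → Bool | (1 / (k + 1) : ℝ) * (F n).card ≤ |Sdev K B (F n) x|}
        ≤ ∑' n, ENNReal.ofReal (2 * α ^ (F n).card) :=
      ENNReal.tsum_le_tsum (fun n => hb (F n))
    refine ne_top_of_le_ne_top ?_ hle
    rw [← ENNReal.ofReal_tsum_of_nonneg (fun n => mul_nonneg (by norm_num) (pow_nonneg hα.1.le _)) ((hsum α hα).mul_left 2)]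
    exact ENNReal.ofReal_ne_top
  rw [← ae_all_iff] at key
  filter_upwards [key] with x hx
  rw [Metric.tendsto_atTop]
  intro δ hδ
  obtain ⟨k, hk⟩ := exists_nat_one_div_lt hδ
  obtain ⟨N₀, hN₀⟩ := Filter.eventually_atTop.1 (hx k)
  refine ⟨N₀, fun n hn => ?_⟩
  have h1 := hN₀ n hn
  simp only [Set.mem_setOf_eq, not_le] at h1
  have hNc : (0:ℝ) < (F n).card := by exact_mod_cast Finset.card_pos.2 (hne n)
  rw [Real.dist_eq]
  have hS := Sdev_eq K B (F n) x
  have heq : (((F n).filter (fun g => ∀ h ∈ K, x (h * g) = B h)).card : ℝ) / (F n).card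
      - (1 / 2 : ℝ) ^ K.card = Sdev K B (F n) x / (F n).card := by
    rw [hS, sub_div, mul_div_assoc, div_self hNc.ne', mul_one]
    norm_num
  rw [heq, abs_div, abs_of_pos hNc, div_lt_iff₀ hNc]
  calc |Sdev K B (F n) x| < (1 / (k + 1) : ℝ) * (F n).card := h1
    _ ≤ δ * (F n).card := mul_le_mul_of_nonneg_right hk.le hNc.le

end


/-- If `G` is a countably infinite cancellative semigroup and `(F n)` is a
Følner sequence with `∑ α^{|F n|} < ∞` for all `α ∈ (0,1)`, then `λ`-almost every
`x ∈ {0,1}^G` is `(F n)`-normal, where `λ = μ` is the Bernoulli `(1/2,1/2)`-product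
measure on `{0,1}^G` (characterized by its values on cylinder sets). -/
theorem ae_isNormalFun
    {G : Type*} [Semigroup G] [IsCancelMul G] [Countable G] [Infinite G]
    (F : ℕ → Finset G) (hF : IsFolner F)
    (hsum : ∀ α : ℝ, α ∈ Set.Ioo (0 : ℝ) 1 → Summable fun n => α ^ (F n).card)
    (μ : Measure (G → Bool))
    (hμ : ∀ (K : Finset G) (B : G → Bool),
      μ {x | ∀ h ∈ K, x h = B h} = (2 : ENNReal)⁻¹ ^ K.card) :
    ∀ᵐ x ∂μ, IsNormalFun F x := by
  letI : DecidableEq G := Classical.decEq G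
  have hne := hF.1
  have main : ∀ᵐ x ∂μ, ∀ i : (K : Finset G) × ({h // h ∈ K} → Bool),
      Tendsto (fun n => (((F n).filter (fun g => ∀ h ∈ i.1,
          x (h * g) = (fun h' => if hh : h' ∈ i.1 then i.2 ⟨h', hh⟩ else false) h)).card : ℝ)
          / (F n).card)
        atTop (nhds ((1 / 2 : ℝ) ^ i.1.card)) := by
    rw [ae_all_iff]
    intro i
    exact ae_tendsto_block hμ F hne hsum i.1 _
  filter_upwards [main] with x hx
  intro K _hK B
  have h := hx ⟨K, fun h => B h.1⟩
  have heq : ∀ n, (F n).filter (fun g => ∀ h ∈ K,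
        x (h * g) = (fun h' => if hh : h' ∈ K then B (⟨h', hh⟩ : {h // h ∈ K}).1 else false) h)
      = (F n).filter (fun g => ∀ h ∈ K, x (h * g) = B h) := by
    intro n
    apply Finset.filter_congr
    intro g _
    refine forall_congr' fun h => ?_
    refine forall_congr' fun hh => ?_
    simp [hh]
  have hfun : (fun n => (((F n).filter (fun g => ∀ h ∈ K,
        x (h * g) = (fun h' => if hh : h' ∈ K then B (⟨h', hh⟩ : {h // h ∈ K}).1 else false) h)).card : ℝ)
          / (F n).card)
      = (fun n => (((F n).filter (fun g => ∀ h ∈ K, x (h * g) = B h)).card : ℝ) / (F n).card) :=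
    funext fun n => by rw [heq n]
  rw [hfun] at h
  exact h
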